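/- Let n = 3^k, let 1 ≤ j ≤ k − 2, and suppose the cubic MRS function f = (1, r, s) (with 1 < r < s ≤ n) lies in an orbit of the action of G_n of size exactly v(j) = 2·3^j. Then for every integer τ not divisible by 3: (r − 1)τ^{v(j)} + 1 ≡ r (mod 3^k) and (s − 1)τ^{v(j)} + 1 ≡ s (mod 3^k); and moreover r ≡ 1 (mod 3^{k−j−1}) and s ≡ 1 (mod 3^{k−j−1}). -/

import Mathlib

/-- Boolean functions in `n` variables, with variables indexed by `ZMod n`
(index `i : ZMod n` corresponds to the variable `x_{i+1}` in 1-indexed notation,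
so that "`a Mod n`" arithmetic on subscripts becomes arithmetic in `ZMod n`). -/
abbrev BF (n : ℕ) := (ZMod n → ZMod 2) → ZMod 2

/-- The cubic MRS function `(1,j,k)` in `n` variables:
`x ↦ Σ_{i=1}^n x_i x_{(i+j-1) Mod n} x_{(i+k-1) Mod n}`, the sum taken in `GF(2)`. -/
def cubicMRS (n : ℕ) [NeZero n] (j k : ℕ) : BF n :=
  fun x => ∑ i : ZMod n,
    x i * x (i + ((j - 1 : ℕ) : ZMod n)) * x (i + ((k - 1 : ℕ) : ZMod n))

/-- `C_n`: the set of all cubic MRS functions `(1,j,k)`, `1 < j < k ≤ n`, in `n` variables. -/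
def cubicSet (n : ℕ) [NeZero n] : Set (BF n) :=
  {f | ∃ j k : ℕ, 1 < j ∧ j < k ∧ k ≤ n ∧ f = cubicMRS n j k}

/-- The set of cubic MRS functions `(1,j,k)` with `1 < j, k ≤ n`, `j ≠ k`. -/
def cubicSetNe (n : ℕ) [NeZero n] : Set (BF n) :=
  {f | ∃ j k : ℕ, 1 < j ∧ j ≤ n ∧ 1 < k ∧ k ≤ n ∧ j ≠ k ∧ f = cubicMRS n j k}

/-- The action of a permutation `μ` of the variables on a Boolean function:
`(μ·f)(x₁,…,xₙ) = f(x_{μ(1)},…,x_{μ(n)})`. -/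
def permAct {n : ℕ} (μ : Equiv.Perm (ZMod n)) (f : BF n) : BF n :=
  fun x => f (fun i => x (μ i))

/-- A Boolean function is rotation symmetric if it is invariant under the cyclic
shift of the variables. -/
def rotSym {n : ℕ} (f : BF n) : Prop :=
  ∀ x : ZMod n → ZMod 2, f (fun i => x (i + 1)) = f x

/-- A permutation `μ` preserves rotation symmetry (for cubic MRS functions in `n`
variables) if `μ·f` is rotation symmetric for every cubic MRS function `f`. -/
def preservesRS (n : ℕ) [NeZero n] (μ : Equiv.Perm (ZMod n)) : Prop :=
  ∀ f ∈ cubicSetNe n, rotSym (permAct μ f)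

/-- The permutation `σ_{τ,n} : i ↦ ((i-1)τ + 1) Mod n` of the variables, for `τ` a
unit mod `n`; in the 0-indexed coordinates used here it is `i ↦ τ·i` on `ZMod n`. -/
def sigmaPerm {n : ℕ} (u : (ZMod n)ˣ) : Equiv.Perm (ZMod n) where
  toFun := fun i => (u : ZMod n) * i
  invFun := fun i => ((u⁻¹ : (ZMod n)ˣ) : ZMod n) * i
  left_inv := fun i => by simp [← mul_assoc]
  right_inv := fun i => by simp [← mul_assoc]

/-- The orbit of a Boolean function `f` under the action of the group
`G_n = {σ_{τ,n} : gcd(τ,n) = 1}`. -/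
def orbit (n : ℕ) [NeZero n] (f : BF n) : Set (BF n) :=
  {g | ∃ u : (ZMod n)ˣ, g = permAct (sigmaPerm u) f}

/-- The set of orbits of the action of `G_n` on the set `C_n` of cubic MRS functions. -/
def orbitsOn (n : ℕ) [NeZero n] : Set (Set (BF n)) :=
  {S | ∃ f ∈ cubicSet n, S = orbit n f}

def mrsOff (n : ℕ) [NeZero n] (a b : ZMod n) : BF n :=
  fun x => ∑ i : ZMod n, x i * x (i + a) * x (i + b)

lemma cubicMRS_eq_mrsOff (n : ℕ) [NeZero n] (r s : ℕ) :
    cubicMRS n r s = mrsOff n ((r-1 : ℕ) : ZMod n) ((s-1 : ℕ) : ZMod n) := rfl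

lemma mrsOff_comm (n : ℕ) [NeZero n] (a b : ZMod n) : mrsOff n a b = mrsOff n b a := by
  funext x; exact Finset.sum_congr rfl (fun i _ => by ring)

lemma permAct_sigma_mrsOff (n : ℕ) [NeZero n] (u : (ZMod n)ˣ) (a b : ZMod n) :
    permAct (sigmaPerm u) (mrsOff n a b) = mrsOff n ((u:ZMod n)*a) ((u:ZMod n)*b) := by
  funext x
  show ∑ i : ZMod n, x ((u:ZMod n)*i) * x ((u:ZMod n)*(i+a)) * x ((u:ZMod n)*(i+b))
      = ∑ i : ZMod n, x i * x (i + (u:ZMod n)*a) * x (i + (u:ZMod n)*b)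
  refine Fintype.sum_equiv (sigmaPerm u) _ _ (fun i => ?_)
  show x ((u:ZMod n)*i) * x ((u:ZMod n)*(i+a)) * x ((u:ZMod n)*(i+b))
      = x ((u:ZMod n)*i) * x ((u:ZMod n)*i + (u:ZMod n)*a) * x ((u:ZMod n)*i + (u:ZMod n)*b)
  rw [mul_add, mul_add]

lemma mrs_eval_one (n : ℕ) [NeZero n] (hodd : Odd n) (a b : ZMod n)
    (ha : a ≠ 0) (hb : b ≠ 0) (hab : a ≠ b) :
    mrsOff n a b (fun i => if i ∈ ({0, a, b} : Finset (ZMod n)) then (1:ZMod 2) else 0) = 1 := by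
  set S : Finset (ZMod n) := {0, a, b} with hS
  have hcard : S.card = 3 := by
    rw [hS]
    rw [Finset.card_insert_of_notMem (by simp [ha.symm, hb.symm]),
        Finset.card_insert_of_notMem (by simp [hab]), Finset.card_singleton]
  -- the translation stabilizer of S
  set T : AddSubgroup (ZMod n) :=
    { carrier := {i | ∀ z : ZMod n, z ∈ S ↔ z + i ∈ S}
      zero_mem' := by intro z; simp
      add_mem' := by
        intro i j hi hj z
        rw [hi z, hj (z + i), add_assoc]
      neg_mem' := by
        intro i hi z
        have := hi (z + -i)
        simp at this
        exact this.symm } with hT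
  have key : ∀ i : ZMod n, (i ∈ S ∧ i + a ∈ S ∧ i + b ∈ S) ↔ (∀ z : ZMod n, z ∈ S ↔ z + i ∈ S) := by
    intro i
    constructor
    · rintro ⟨h1, h2, h3⟩
      have himg : S.image (· + i) = S := by
        apply Finset.eq_of_subset_of_card_le
        · intro z hz
          simp only [Finset.mem_image] at hz
          obtain ⟨w, hw, rfl⟩ := hz
          rw [hS] at hw
          simp only [Finset.mem_insert, Finset.mem_singleton] at hw
          rcases hw with rfl | rfl | rfl
          · simpa using h1
          · rwa [add_comm]
          · rwa [add_comm]
        · rw [Finset.card_image_of_injective _ (add_left_injective i)]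
      intro z
      constructor
      · intro hz
        rw [← himg]
        exact Finset.mem_image_of_mem _ hz
      · intro hz
        rw [← himg, Finset.mem_image] at hz
        obtain ⟨w, hw, hwz⟩ := hz
        rwa [add_left_injective i hwz] at hw
    · intro h
      refine ⟨?_, ?_, ?_⟩
      · have := (h 0).mp (by simp [hS]); rwa [zero_add] at this
      · have := (h a).mp (by simp [hS]); rwa [add_comm] at this
      · have := (h b).mp (by simp [hS]); rwa [add_comm] at this
  have hterm : ∀ i : ZMod n,
      (if i ∈ S then (1:ZMod 2) else 0) * (if i + a ∈ S then (1:ZMod 2) else 0)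
        * (if i + b ∈ S then (1:ZMod 2) else 0)
      = if (∀ z : ZMod n, z ∈ S ↔ z + i ∈ S) then 1 else 0 := by
    intro i
    have step : (if i ∈ S then (1:ZMod 2) else 0) * (if i + a ∈ S then (1:ZMod 2) else 0)
        * (if i + b ∈ S then (1:ZMod 2) else 0)
        = if (i ∈ S ∧ i + a ∈ S ∧ i + b ∈ S) then 1 else 0 := by
      by_cases h1 : i ∈ S <;> by_cases h2 : i + a ∈ S <;> by_cases h3 : i + b ∈ S <;>
        simp [h1, h2, h3]
    rw [step]
    exact if_congr (key i) rfl rfl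
  have hsum : mrsOff n a b (fun i => if i ∈ S then (1:ZMod 2) else 0)
      = ((Finset.univ.filter (fun i : ZMod n => ∀ z : ZMod n, z ∈ S ↔ z + i ∈ S)).card : ZMod 2) := by
    unfold mrsOff
    rw [Finset.sum_congr rfl (fun i _ => hterm i)]
    rw [Finset.sum_boole]
  rw [hsum]
  have hcardT : Nat.card T
      = (Finset.univ.filter (fun i : ZMod n => ∀ z : ZMod n, z ∈ S ↔ z + i ∈ S)).card := by
    have e : ↥T ≃ {i : ZMod n // ∀ z : ZMod n, z ∈ S ↔ z + i ∈ S} :=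
      Equiv.subtypeEquivRight (fun i => Iff.rfl)
    rw [Nat.card_congr e, Nat.card_eq_fintype_card, Fintype.card_subtype]
  have hdvd : Nat.card T ∣ n := by
    have := AddSubgroup.card_addSubgroup_dvd_card T
    rwa [Nat.card_zmod] at this
  have hoddT : Nat.card T % 2 = 1 := by
    rcases Nat.even_or_odd (Nat.card T) with he | ho
    · exfalso
      have : (2 : ℕ) ∣ n := dvd_trans he.two_dvd hdvd
      rcases hodd with ⟨m, hm⟩
      omega
    · rwa [Nat.odd_iff] at ho
  rw [← hcardT]
  have : ((Nat.card T : ℕ) : ZMod 2) = ((1 : ℕ) : ZMod 2) := by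
    rw [ZMod.natCast_eq_natCast_iff]
    show Nat.card T % 2 = 1 % 2
    omega
  rw [this]
  norm_num

lemma mrs_extract (n : ℕ) [NeZero n] (hodd : Odd n) (a b a' b' : ZMod n)
    (ha : a ≠ 0) (hb : b ≠ 0) (hab : a ≠ b)
    (heq : mrsOff n a b = mrsOff n a' b') :
    ∃ m ∈ ({0,a,b} : Finset (ZMod n)), m + a' ∈ ({0,a,b} : Finset (ZMod n))
      ∧ m + b' ∈ ({0,a,b} : Finset (ZMod n)) := by
  set S : Finset (ZMod n) := {0, a, b} with hS
  have h1 := mrs_eval_one n hodd a b ha hb hab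
  rw [heq] at h1
  have h2 : ∃ m : ZMod n,
      (if m ∈ S then (1:ZMod 2) else 0) * (if m + a' ∈ S then (1:ZMod 2) else 0)
        * (if m + b' ∈ S then (1:ZMod 2) else 0) ≠ 0 := by
    by_contra hcon
    push_neg at hcon
    unfold mrsOff at h1
    rw [Finset.sum_congr rfl (fun m _ => hcon m)] at h1
    simp at h1
  obtain ⟨m, hm⟩ := h2
  refine ⟨m, ?_, ?_, ?_⟩ <;> by_contra hc <;> simp [hc] at hm

noncomputable def bfAct (n : ℕ) [NeZero n] : MulAction (ZMod n)ˣ (BF n) where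
  smul u f := permAct (sigmaPerm u) f
  one_smul f := funext fun x => congrArg f (funext fun i => by
    show x (((1 : (ZMod n)ˣ) : ZMod n) * i) = x i
    rw [Units.val_one, one_mul])
  mul_smul u v f := funext fun x => congrArg f (funext fun i => by
    show x (((u*v : (ZMod n)ˣ) : ZMod n) * i) = x ((u : ZMod n) * ((v : ZMod n) * i))
    rw [Units.val_mul, mul_assoc])

lemma orbit_stab_card (n : ℕ) [NeZero n] (f : BF n) :
    (orbit n f).ncard * Nat.card {u : (ZMod n)ˣ // permAct (sigmaPerm u) f = f}
      = Nat.card (ZMod n)ˣ := by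
  letI := bfAct n
  have h1 : orbit n f = MulAction.orbit (ZMod n)ˣ f := by
    ext g
    constructor
    · rintro ⟨u, rfl⟩; exact ⟨u, rfl⟩
    · rintro ⟨u, rfl⟩; exact ⟨u, rfl⟩
  have h2 : Nat.card {u : (ZMod n)ˣ // permAct (sigmaPerm u) f = f}
      = Nat.card (MulAction.stabilizer (ZMod n)ˣ f) := by
    apply Nat.card_congr
    exact Equiv.subtypeEquivRight (fun u => Iff.rfl)
  rw [h1, h2, ← Nat.card_coe_set_eq, ← Nat.card_prod]
  exact Nat.card_congr (MulAction.orbitProdStabilizerEquivGroup (ZMod n)ˣ f)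

lemma stab_pow (n : ℕ) [NeZero n] (f : BF n) (u : (ZMod n)ˣ)
    (hu : permAct (sigmaPerm u) f = f) :
    u ^ (Nat.card {v : (ZMod n)ˣ // permAct (sigmaPerm v) f = f}) = 1 := by
  letI := bfAct n
  have hmem : u ∈ MulAction.stabilizer (ZMod n)ˣ f := hu
  have hcard : Nat.card {v : (ZMod n)ˣ // permAct (sigmaPerm v) f = f}
      = Nat.card (MulAction.stabilizer (ZMod n)ˣ f) :=
    Nat.card_congr (Equiv.subtypeEquivRight fun v => Iff.rfl)
  rw [hcard]
  have h := pow_card_eq_one' (G := MulAction.stabilizer (ZMod n)ˣ f)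
    (x := ⟨u, hmem⟩)
  have := congrArg (fun y : MulAction.stabilizer (ZMod n)ˣ f => (y : (ZMod n)ˣ)) h
  simpa using this

lemma val_mod3_one (k : ℕ) (hk : 0 < k) [NeZero (3^k)] (u : (ZMod (3^k))ˣ) (m : ℕ)
    (hu : u ^ (3^m : ℕ) = 1) : (u : ZMod (3^k)).val % 3 = 1 := by
  have hdvd : (3:ℕ) ∣ 3^k := dvd_pow_self 3 hk.ne'
  set φ := Units.map (ZMod.castHom hdvd (ZMod 3)).toMonoidHom with hφ
  have hw : (φ u) ^ (3^m : ℕ) = 1 := by rw [← map_pow, hu, map_one]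
  have hord : orderOf (φ u) ∣ 3^m := orderOf_dvd_of_pow_eq_one hw
  have hord2 : orderOf (φ u) ∣ 2 := by
    have h := orderOf_dvd_card (x := φ u)
    have : Fintype.card (ZMod 3)ˣ = 2 := by decide
    rwa [this] at h
  have hone : φ u = 1 := by
    rw [← orderOf_eq_one_iff]
    have hg := Nat.dvd_gcd hord hord2
    have : Nat.gcd (3^m) 2 = 1 := Nat.Coprime.pow_left m (by decide)
    rw [this] at hg
    exact Nat.dvd_one.mp hg
  have hcast : ((u : ZMod (3^k)).val : ZMod 3) = 1 := by
    have := congrArg (fun y : (ZMod 3)ˣ => (y : ZMod 3)) hone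
    simp only [hφ, Units.coe_map, Units.val_one] at this
    rwa [RingHom.toMonoidHom_eq_coe, MonoidHom.coe_coe, ZMod.castHom_apply,
      ← ZMod.natCast_val] at this
  have : ((u : ZMod (3^k)).val : ZMod 3) = ((1:ℕ) : ZMod 3) := by simpa using hcast
  rw [ZMod.natCast_eq_natCast_iff] at this
  simpa [Nat.ModEq] using this

lemma card_ann (n : ℕ) [NeZero n] (a : ℕ) (ha : 0 < a) :
    Nat.card {x : ZMod n // (a : ZMod n) * x = 0} = Nat.gcd a n := by
  have hn : 0 < n := Nat.pos_of_ne_zero (NeZero.ne n)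
  set d := Nat.gcd a n with hd
  have hdpos : 0 < d := Nat.gcd_pos_of_pos_left n ha
  have hdn : d ∣ n := Nat.gcd_dvd_right a n
  have hda : d ∣ a := Nat.gcd_dvd_left a n
  set e := n / d with he
  have hed : e * d = n := Nat.div_mul_cancel hdn
  have hepos : 0 < e := Nat.div_pos (Nat.le_of_dvd hn hdn) hdpos
  obtain ⟨a', ha'⟩ := hda
  have ha'd : a / d = a' := by rw [ha', Nat.mul_div_cancel_left _ hdpos]
  have hcop : Nat.Coprime e a' := by
    have := (Nat.coprime_div_gcd_div_gcd (m := a) (n := n) hdpos).symm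
    rwa [ha'd, ← hd, ← he] at this
  have key : ∀ x : ZMod n, (a : ZMod n) * x = 0 ↔ e ∣ x.val := by
    intro x
    have hx : ((x.val : ℕ) : ZMod n) = x := by rw [ZMod.natCast_val, ZMod.cast_id]
    have hcast : (a : ZMod n) * x = ((a * x.val : ℕ) : ZMod n) := by push_cast [hx]; ring
    rw [hcast, ZMod.natCast_eq_zero_iff]
    constructor
    · rintro ⟨c, hcc⟩
      have hq : d * (a' * x.val) = d * (e * c) := by
        rw [← mul_assoc, ← ha', hcc, ← hed]; ring
      have : a' * x.val = e * c := Nat.eq_of_mul_eq_mul_left hdpos hq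
      exact Nat.Coprime.dvd_of_dvd_mul_left hcop ⟨c, this⟩
    · rintro ⟨c, hc⟩
      exact ⟨a' * c, by rw [hc, ha', ← hed]; ring⟩
  have bij : Function.Bijective (fun m : Fin d => (⟨((m.val * e : ℕ) : ZMod n), by
      rw [key]
      have hlt : m.val * e < n := by
        calc m.val * e < d * e := (Nat.mul_lt_mul_right hepos).mpr m.isLt
        _ = n := by rw [mul_comm]; exact hed
      rw [ZMod.val_cast_of_lt hlt]
      exact ⟨m.val, mul_comm _ _⟩⟩ : {x : ZMod n // (a : ZMod n) * x = 0})) := by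
    constructor
    · intro m m' hmm
      have h0 := congrArg (fun y => (y : {x : ZMod n // (a : ZMod n) * x = 0}).val.val) hmm
      simp only at h0
      have hlt : m.val * e < n := by
        calc m.val * e < d * e := (Nat.mul_lt_mul_right hepos).mpr m.isLt
        _ = n := by rw [mul_comm]; exact hed
      have hlt' : m'.val * e < n := by
        calc m'.val * e < d * e := (Nat.mul_lt_mul_right hepos).mpr m'.isLt
        _ = n := by rw [mul_comm]; exact hed
      rw [ZMod.val_cast_of_lt hlt, ZMod.val_cast_of_lt hlt'] at h0
      exact Fin.ext (Nat.eq_of_mul_eq_mul_right hepos h0)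
    · rintro ⟨x, hx⟩
      rw [key] at hx
      obtain ⟨c, hc⟩ := hx
      have hclt : c < d := by
        have h1 : x.val < n := ZMod.val_lt x
        rw [hc] at h1
        rw [← hed, mul_comm e d] at h1
        rw [mul_comm e c] at h1
        exact Nat.lt_of_mul_lt_mul_right h1
      refine ⟨⟨c, hclt⟩, ?_⟩
      apply Subtype.ext
      show ((c * e : ℕ) : ZMod n) = x
      rw [mul_comm c e, ← hc, ZMod.natCast_val, ZMod.cast_id]
  calc Nat.card {x : ZMod n // (a : ZMod n) * x = 0}
      = Nat.card (Fin d) := (Nat.card_congr (Equiv.ofBijective _ bij)).symm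
    _ = d := by simp

lemma val_natCast_eq (n : ℕ) [NeZero n] (w : ZMod n) : ((w.val : ℕ) : ZMod n) = w := by
  rw [ZMod.natCast_val, ZMod.cast_id]

lemma orbit_degenerate (n : ℕ) [NeZero n] (h3n : (3:ℕ) ∣ n) (a b : ZMod n)
    (h3 : (3 : ZMod n) * a = 0) (hb2 : b = a + a) :
    orbit n (mrsOff n a b) = {mrsOff n a b} := by
  ext g
  simp only [Set.mem_singleton_iff]
  constructor
  · rintro ⟨u, rfl⟩
    rw [permAct_sigma_mrsOff]
    set w : ZMod n := (u : ZMod n) with hw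
    have hwv : ((w.val : ℕ) : ZMod n) = w := val_natCast_eq n w
    have hcop : Nat.Coprime w.val n := ZMod.val_coe_unit_coprime u
    have h3v : ¬ (3 ∣ w.val) := by
      intro hdvd
      have : (3:ℕ) ∣ Nat.gcd w.val n := Nat.dvd_gcd hdvd h3n
      rw [hcop] at this
      omega
    have hmod := Nat.mod_lt w.val (show 0 < 3 by norm_num)
    rcases (show w.val % 3 = 1 ∨ w.val % 3 = 2 by omega) with h1 | h2
    · set t := w.val / 3 with ht
      have hv : w.val = 3 * t + 1 := by omega
      have hwa : w * a = a := by
        rw [← hwv, hv]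
        push_cast
        linear_combination (t : ZMod n) * h3
      have hwb : w * b = b := by
        rw [← hwv, hv, hb2]
        push_cast
        linear_combination (2 * t : ZMod n) * h3
      rw [hwa, hwb]
    · set t := w.val / 3 with ht
      have hv : w.val = 3 * t + 2 := by omega
      have hwa : w * a = b := by
        rw [← hwv, hv, hb2]
        push_cast
        linear_combination (t : ZMod n) * h3
      have hwb : w * b = a := by
        rw [← hwv, hv, hb2]
        push_cast
        linear_combination (2 * t + 1 : ZMod n) * h3
      rw [hwa, hwb, mrsOff_comm]
  · rintro rfl
    exact ⟨1, by rw [permAct_sigma_mrsOff]; simp⟩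

lemma stab_fix (k : ℕ) (hk : 0 < k) [NeZero (3^k)] (a b : ZMod (3^k))
    (ha : a ≠ 0) (hb : b ≠ 0) (hab : a ≠ b)
    (hdeg : ¬((3 : ZMod (3^k)) * a = 0 ∧ b = a + a))
    (u : (ZMod (3^k))ˣ)
    (hu : permAct (sigmaPerm u) (mrsOff (3^k) a b) = mrsOff (3^k) a b)
    (h1 : (u : ZMod (3^k)).val % 3 = 1) :
    (u : ZMod (3^k)) * a = a ∧ (u : ZMod (3^k)) * b = b := by
  haveI : Fact (1 < 3^k) := ⟨by calc 1 < 3^1 := by norm_num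
                                  _ ≤ 3^k := Nat.pow_le_pow_right (by norm_num) hk⟩
  set w : ZMod (3^k) := (u : ZMod (3^k)) with hwdef
  have heq : mrsOff (3^k) a b = mrsOff (3^k) (w*a) (w*b) :=
    hu.symm.trans (permAct_sigma_mrsOff (3^k) u a b)
  have hodd : Odd (3^k) := Odd.pow ⟨1, by norm_num⟩
  obtain ⟨m, hmS, hma, hmb⟩ := mrs_extract (3^k) hodd a b (w*a) (w*b) ha hb hab heq
  have hw0 : w ≠ 0 := Units.ne_zero u
  have hwa0 : w * a ≠ 0 := by
    intro h; exact ha ((Units.mul_right_eq_zero u).mp h)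
  have hwb0 : w * b ≠ 0 := by
    intro h; exact hb ((Units.mul_right_eq_zero u).mp h)
  have hwab : w * a ≠ w * b := by
    intro h
    apply hab
    have h2 := congrArg (fun z => ((u⁻¹ : (ZMod (3^k))ˣ) : ZMod (3^k)) * z) h
    simpa [hwdef, ← mul_assoc, Units.inv_mul] using h2
  set t := w.val / 3 with ht
  have hv : w.val = 3 * t + 1 := by omega
  have hwv : ((w.val : ℕ) : ZMod (3^k)) = w := val_natCast_eq _ w
  have hU2 : IsUnit (w + 1) := by
    have hrw : w + 1 = ((3*t+2 : ℕ) : ZMod (3^k)) := by rw [← hwv, hv]; push_cast; ring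
    rw [hrw, ZMod.isUnit_iff_coprime]
    exact Nat.Coprime.pow_right k
      (Nat.coprime_comm.mp ((Nat.prime_three.coprime_iff_not_dvd).mpr (by omega)))
  have hE : IsUnit (((3*t*t+3*t+1 : ℕ)) : ZMod (3^k)) := by
    rw [ZMod.isUnit_iff_coprime]
    refine Nat.Coprime.pow_right k
      (Nat.coprime_comm.mp ((Nat.prime_three.coprime_iff_not_dvd).mpr ?_))
    have hq : 3*t*t+3*t+1 = 3*(t*t+t)+1 := by ring
    rw [hq]
    omega
  have h3id : w*w + w + 1 = (3 : ZMod (3^k)) * ((3*t*t+3*t+1 : ℕ) : ZMod (3^k)) := by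
    rw [← hwv, hv]; push_cast; ring
  simp only [Finset.mem_insert, Finset.mem_singleton] at hmS hma hmb
  rcases hmS with rfl | hm | hm
  · -- m = 0
    rw [zero_add] at hma hmb
    rcases hma with h | h | h
    · exact absurd h hwa0
    · -- w*a = a
      rcases hmb with h' | h' | h'
      · exact absurd h' hwb0
      · exact absurd (h.trans h'.symm) hwab
      · exact ⟨h, h'⟩
    · -- w*a = b
      rcases hmb with h' | h' | h'
      · exact absurd h' hwb0
      · -- swap case
        have hz : (w+1) * ((w - 1) * a) = 0 := by linear_combination w * h + h'
        have h0 : (w-1) * a = 0 := by rwa [hU2.mul_right_eq_zero] at hz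
        have hwaa : w * a = a := by linear_combination h0
        rw [hwaa] at h
        exact absurd h hab
      · exact absurd (h.trans h'.symm) hwab
  · -- m = a
    rw [hm] at hma hmb
    have hma' : a + w * a = b := by
      rcases hma with h | h | h
      · exfalso
        have hz : (w+1) * a = 0 := by linear_combination h
        exact ha (by rwa [hU2.mul_right_eq_zero] at hz)
      · exfalso
        have : w * a = 0 := by linear_combination h
        exact hwa0 this
      · exact h
    have hmb' : a + w * b = 0 := by
      rcases hmb with h | h | h
      · exact h
      · exfalso
        have : w * b = 0 := by linear_combination h
        exact hwb0 this
      · exfalso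
        have : w * a = w * b := by linear_combination hma' - h
        exact hwab this
    exfalso
    have h30 : (w*w + w + 1) * a = 0 := by linear_combination w * hma' + hmb'
    have h30' : ((3*t*t+3*t+1 : ℕ) : ZMod (3^k)) * ((3 : ZMod (3^k)) * a) = 0 := by
      rw [h3id] at h30
      linear_combination h30
    have h3a : (3 : ZMod (3^k)) * a = 0 := by rwa [hE.mul_right_eq_zero] at h30'
    have hwaa : w * a = a := by
      rw [← hwv, hv]; push_cast; linear_combination (t : ZMod (3^k)) * h3a
    rw [hwaa] at hma'
    exact hdeg ⟨h3a, hma'.symm⟩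
  · -- m = b
    rw [hm] at hma hmb
    have hmb' : b + w * b = a := by
      rcases hmb with h | h | h
      · exfalso
        have hz : (w+1) * b = 0 := by linear_combination h
        exact hb (by rwa [hU2.mul_right_eq_zero] at hz)
      · exact h
      · exfalso
        have : w * b = 0 := by linear_combination h
        exact hwb0 this
    have hma' : b + w * a = 0 := by
      rcases hma with h | h | h
      · exact h
      · exfalso
        have : w * a = w * b := by linear_combination h - hmb'
        exact hwab this
      · exfalso
        have : w * a = 0 := by linear_combination h
        exact hwa0 this
    exfalso
    have h30 : (w*w + w + 1) * b = 0 := by linear_combination w * hmb' + hma'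
    have h30' : ((3*t*t+3*t+1 : ℕ) : ZMod (3^k)) * ((3 : ZMod (3^k)) * b) = 0 := by
      rw [h3id] at h30
      linear_combination h30
    have h3b : (3 : ZMod (3^k)) * b = 0 := by rwa [hE.mul_right_eq_zero] at h30'
    have hwbb : w * b = b := by
      rw [← hwv, hv]; push_cast; linear_combination (t : ZMod (3^k)) * h3b
    rw [hwbb] at hmb'
    have ha2 : a = b + b := hmb'.symm
    have h3a : (3 : ZMod (3^k)) * a = 0 := by rw [ha2]; linear_combination 2 * h3b
    have hb2 : b = a + a := by rw [ha2]; linear_combination - h3b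
    exact hdeg ⟨h3a, hb2⟩

/-- For `n = 3^k`, `1 ≤ j ≤ k-2`: if the cubic MRS function `(1,r,s)` (with
`1 < r < s ≤ n`) lies in an orbit of the action of `G_n` of size exactly `2·3^j`, then
for every `τ` not divisible by 3 we have `(r-1)τ^{2·3^j} + 1 ≡ r` and
`(s-1)τ^{2·3^j} + 1 ≡ s (mod 3^k)`, and moreover
`r ≡ s ≡ 1 (mod 3^{k-j-1})`. -/
theorem orbit_size_two_pow_three (k : ℕ) (n : ℕ) (hn : n = 3 ^ k) [NeZero n]
    (j : ℕ) (hj1 : 1 ≤ j) (hj2 : j ≤ k - 2)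
    (r s : ℕ) (hr : 1 < r) (hrs : r < s) (hs : s ≤ n)
    (horb : (orbit n (cubicMRS n r s)).ncard = 2 * 3 ^ j) :
    ∀ τ : ℕ, ¬ (3 ∣ τ) →
      ((r - 1) * τ ^ (2 * 3 ^ j) + 1 ≡ r [MOD 3 ^ k] ∧
       (s - 1) * τ ^ (2 * 3 ^ j) + 1 ≡ s [MOD 3 ^ k] ∧
       r ≡ 1 [MOD 3 ^ (k - j - 1)] ∧ s ≡ 1 [MOD 3 ^ (k - j - 1)]) := by
  subst hn
  have hk3 : 3 ≤ k := by omega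
  have hk : 0 < k := by omega
  have hr1 : 0 < r - 1 := by omega
  have hs1 : r - 1 < s - 1 := by omega
  have hs2 : s - 1 < 3 ^ k := by
    have : s ≤ 3 ^ k := hs
    omega
  have hr2 : r - 1 < 3 ^ k := by omega
  set a : ZMod (3^k) := ((r - 1 : ℕ) : ZMod (3^k)) with hadef
  set b : ZMod (3^k) := ((s - 1 : ℕ) : ZMod (3^k)) with hbdef
  have ha : a ≠ 0 := by
    rw [hadef]
    intro h
    rw [ZMod.natCast_eq_zero_iff] at h
    have := Nat.le_of_dvd hr1 h
    omega
  have hb : b ≠ 0 := by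
    rw [hbdef]
    intro h
    rw [ZMod.natCast_eq_zero_iff] at h
    have := Nat.le_of_dvd (by omega) h
    omega
  have hab : a ≠ b := by
    rw [hadef, hbdef]
    intro h
    rw [ZMod.natCast_eq_natCast_iff] at h
    have h2 : (r-1) % 3^k = (s-1) % 3^k := h
    rw [Nat.mod_eq_of_lt hr2, Nat.mod_eq_of_lt hs2] at h2
    omega
  have hfeq : cubicMRS (3^k) r s = mrsOff (3^k) a b := cubicMRS_eq_mrsOff (3^k) r s
  rw [hfeq] at horb
  -- exclude the degenerate case
  have hdeg : ¬((3 : ZMod (3^k)) * a = 0 ∧ b = a + a) := by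
    rintro ⟨h3a, hb2⟩
    have := orbit_degenerate (3^k) (dvd_pow_self 3 hk.ne') a b h3a hb2
    rw [this, Set.ncard_singleton] at horb
    have h3j : 3^1 ≤ 3^j := Nat.pow_le_pow_right (by norm_num) hj1
    simp at h3j
    omega
  -- orbit-stabilizer
  set N := Nat.card {v : (ZMod (3^k))ˣ // permAct (sigmaPerm v) (mrsOff (3^k) a b) = mrsOff (3^k) a b} with hN
  have hos := orbit_stab_card (3^k) (mrsOff (3^k) a b)
  rw [horb, ← hN] at hos
  have hcardU : Nat.card (ZMod (3^k))ˣ = 3^(k-1) * 2 := by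
    rw [Nat.card_eq_fintype_card, ZMod.card_units_eq_totient,
      Nat.totient_prime_pow Nat.prime_three hk]
  rw [hcardU] at hos
  have hNval : N = 3^(k-1-j) := by
    have hsplit : (3:ℕ)^(k-1) = 3^j * 3^(k-1-j) := by
      rw [← pow_add]
      congr 1
      omega
    rw [hsplit] at hos
    have h2 : 3^j * (2 * N) = 3^j * (2 * 3^(k-1-j)) := by ring_nf; ring_nf at hos; omega
    have h3 : 2 * N = 2 * 3^(k-1-j) := Nat.eq_of_mul_eq_mul_left (pow_pos (by norm_num) j) h2
    omega
  -- every stabilizer element fixes a and b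
  have hfix : ∀ u : (ZMod (3^k))ˣ,
      permAct (sigmaPerm u) (mrsOff (3^k) a b) = mrsOff (3^k) a b →
      (u : ZMod (3^k)) * a = a ∧ (u : ZMod (3^k)) * b = b := by
    intro u hu
    have hpow := stab_pow (3^k) (mrsOff (3^k) a b) u hu
    rw [← hN, hNval] at hpow
    have h1 := val_mod3_one k hk u (k-1-j) hpow
    exact stab_fix k hk a b ha hb hab hdeg u hu h1
  -- counting: N ≤ gcd
  have hdiv : ∀ (c : ℕ), 0 < c → c < 3^k →
      (∀ u : (ZMod (3^k))ˣ,
        permAct (sigmaPerm u) (mrsOff (3^k) a b) = mrsOff (3^k) a b →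
        (u : ZMod (3^k)) * ((c : ℕ) : ZMod (3^k)) = ((c : ℕ) : ZMod (3^k))) →
      3^(k-j-1) ∣ c := by
    intro c hc hc2 hfixc
    have hinj : Function.Injective (fun v : {v : (ZMod (3^k))ˣ //
        permAct (sigmaPerm v) (mrsOff (3^k) a b) = mrsOff (3^k) a b} =>
        (⟨((v : (ZMod (3^k))ˣ) : ZMod (3^k)) - 1, by
          have := hfixc v.1 v.2
          linear_combination this⟩ :
          {x : ZMod (3^k) // ((c : ℕ) : ZMod (3^k)) * x = 0})) := by
      intro v v' hvv
      have h2 : ((v : (ZMod (3^k))ˣ) : ZMod (3^k)) - 1 = ((v' : (ZMod (3^k))ˣ) : ZMod (3^k)) - 1 :=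
        congrArg Subtype.val hvv
      have h3 : ((v : (ZMod (3^k))ˣ) : ZMod (3^k)) = ((v' : (ZMod (3^k))ˣ) : ZMod (3^k)) := by
        linear_combination h2
      exact Subtype.ext (Units.ext h3)
    have hle : N ≤ Nat.card {x : ZMod (3^k) // ((c : ℕ) : ZMod (3^k)) * x = 0} :=
      Nat.card_le_card_of_injective _ hinj
    rw [card_ann (3^k) c hc, hNval] at hle
    obtain ⟨i, hik, hi⟩ := (Nat.dvd_prime_pow Nat.prime_three).mp (Nat.gcd_dvd_right c (3^k))
    rw [hi] at hle
    have hij : k - 1 - j ≤ i := by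
      by_contra hcon
      push_neg at hcon
      have h8 := Nat.pow_le_pow_right (show 1 ≤ 3 by norm_num) (show i + 1 ≤ k-1-j by omega)
      have h9 : (3:ℕ)^i < 3^(i+1) := Nat.pow_lt_pow_right (by norm_num) (by omega)
      omega
    have : (3:ℕ)^(k-j-1) ∣ 3^i := by
      apply pow_dvd_pow
      omega
    calc (3:ℕ)^(k-j-1) ∣ 3^i := this
      _ = Nat.gcd c (3^k) := hi.symm
      _ ∣ c := Nat.gcd_dvd_left c (3^k)
  have hra : 3^(k-j-1) ∣ r - 1 := by
    apply hdiv (r-1) hr1 hr2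
    intro u hu
    exact (hfix u hu).1
  have hsa : 3^(k-j-1) ∣ s - 1 := by
    apply hdiv (s-1) (by omega) hs2
    intro u hu
    exact (hfix u hu).2
  -- final conclusions
  intro τ hτ
  have hτ0 : 0 < τ := by
    rcases Nat.eq_zero_or_pos τ with h | h
    · exact absurd (h ▸ dvd_zero 3) hτ
    · exact h
  have hτpow : 1 ≤ τ ^ (2 * 3^j) := Nat.one_le_pow _ _ hτ0
  have hcop : Nat.Coprime τ (3^(j+1)) :=
    Nat.Coprime.pow_right _ (Nat.coprime_comm.mp ((Nat.prime_three.coprime_iff_not_dvd).mpr hτ))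
  have heuler := Nat.ModEq.pow_totient hcop
  rw [Nat.totient_prime_pow Nat.prime_three (Nat.succ_pos j)] at heuler
  have hexp : 3 ^ (j+1-1) * (3-1) = 2 * 3^j := by
    simp [mul_comm]
  rw [hexp] at heuler
  have hdvd1 : 3^(j+1) ∣ τ ^ (2*3^j) - 1 := (Nat.modEq_iff_dvd' hτpow).mp heuler.symm
  have hmain : ∀ c : ℕ, 0 < c → 3^(k-j-1) ∣ c →
      c * τ ^ (2 * 3 ^ j) + 1 ≡ c + 1 [MOD 3 ^ k] := by
    intro c hc hcd
    apply Nat.ModEq.add_right 1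
    have h1 : c ≤ c * τ ^ (2*3^j) := Nat.le_mul_of_pos_right c (by omega)
    rw [Nat.ModEq.comm, Nat.modEq_iff_dvd' h1]
    have h2 : c * τ ^ (2*3^j) - c = c * (τ ^ (2*3^j) - 1) := by
      rw [Nat.mul_sub]
      omega
    rw [h2]
    have hsplit : (3:ℕ)^k = 3^(k-j-1) * 3^(j+1) := by
      rw [← pow_add]
      congr 1
      omega
    rw [hsplit]
    exact mul_dvd_mul hcd hdvd1
  have hrc : (r - 1) * τ ^ (2 * 3 ^ j) + 1 ≡ r [MOD 3 ^ k] := by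
    have := hmain (r-1) hr1 hra
    have hre : r - 1 + 1 = r := by omega
    rwa [hre] at this
  have hsc : (s - 1) * τ ^ (2 * 3 ^ j) + 1 ≡ s [MOD 3 ^ k] := by
    have := hmain (s-1) (by omega) hsa
    have hse : s - 1 + 1 = s := by omega
    rwa [hse] at this
  refine ⟨hrc, hsc, ?_, ?_⟩
  · exact ((Nat.modEq_iff_dvd' (by omega)).mpr hra).symm
  · exact ((Nat.modEq_iff_dvd' (by omega)).mpr hsa).symm
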